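/- Let X_1,...,X_n be independent {0,1}-valued random variables with Pr[X_i = 1] = p for all i, and let f : {0,1}^n → ℝ satisfy the bounded-differences property with constant c (i.e., changing any single coordinate changes f by at most c). Then for every t > 0, Pr[|f(X) - E[f(X)]| ≥ t] ≤ 2·exp(-t² / (2 c² n p (1 - p) + 2 c t / 3)). In particular, when p = o(1), this bound is asymptotically stronger than the classical McDiarmid bound 2·exp(-2t²/(c²n)). -/

import Mathlib

open MeasureTheory ProbabilityTheory Real

/-- A function on Boolean cubes has the bounded-differences property with constant `c`
if changing any single coordinate changes its value by at most `c`. -/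
def BoundedDifferences {n : ℕ} (f : (Fin n → Bool) → ℝ) (c : ℝ) : Prop :=
  ∀ (x x' : Fin n → Bool) (i : Fin n),
    (∀ j : Fin n, j ≠ i → x j = x' j) → |f x - f x'| ≤ c

/-- Strengthened McDiarmid inequality for biased Bernoulli variables:
if `X_1, ..., X_n` are i.i.d. Bernoulli(p) and `f` has bounded differences with
constant `c`, then for every `t > 0`,
`Pr[|f(X) - E f(X)| ≥ t] ≤ 2 exp(-t² / (2 c² n p (1-p) + 2 c t / 3))`. -/
def wgt (p : ℝ) {n : ℕ} (x : Fin n → Bool) : ℝ := ∏ i, (if x i then p else 1 - p)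

def EE (p : ℝ) {n : ℕ} (g : (Fin n → Bool) → ℝ) : ℝ := ∑ x, wgt p x * g x

lemma wgt_nonneg {p : ℝ} (hp : 0 ≤ p) (hp1 : p ≤ 1) {n : ℕ} (x : Fin n → Bool) :
    0 ≤ wgt p x := by
  apply Finset.prod_nonneg
  intro i _
  by_cases h : x i <;> simp [h] <;> linarith

lemma wgt_cons (p : ℝ) {n : ℕ} (b : Bool) (y : Fin n → Bool) :
    wgt p (Fin.cons b y) = (if b then p else 1 - p) * wgt p y := by
  unfold wgt
  rw [Fin.prod_univ_succ]
  simp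

lemma wgt_cons_true (p : ℝ) {n : ℕ} (y : Fin n → Bool) :
    wgt p (Fin.cons true y) = p * wgt p y := by
  rw [wgt_cons]; norm_num

lemma wgt_cons_false (p : ℝ) {n : ℕ} (y : Fin n → Bool) :
    wgt p (Fin.cons false y) = (1 - p) * wgt p y := by
  rw [wgt_cons]; norm_num

lemma sum_cons {n : ℕ} (F : (Fin (n+1) → Bool) → ℝ) :
    ∑ x, F x = ∑ y : Fin n → Bool, (F (Fin.cons true y) + F (Fin.cons false y)) := by
  rw [← (Fin.consEquiv (fun _ => Bool)).sum_comp F]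
  rw [Fintype.sum_prod_type]
  rw [Fintype.sum_bool]
  rw [← Finset.sum_add_distrib]
  rfl

lemma bd_cons {n : ℕ} {g : (Fin (n+1) → Bool) → ℝ} {c : ℝ}
    (hg : BoundedDifferences g c) (b : Bool) :
    BoundedDifferences (fun y => g (Fin.cons b y)) c := by
  intro y y' i hyy'
  apply hg _ _ i.succ
  intro j
  refine Fin.cases ?_ ?_ j
  · intro _; simp
  · intro k hk
    simp only [Fin.cons_succ]
    exact hyy' k (fun h => hk (by rw [h]))

lemma bd_flip {n : ℕ} {g : (Fin (n+1) → Bool) → ℝ} {c : ℝ}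
    (hg : BoundedDifferences g c) (y : Fin n → Bool) :
    |g (Fin.cons true y) - g (Fin.cons false y)| ≤ c := by
  apply hg _ _ 0
  intro j
  refine Fin.cases ?_ ?_ j
  · intro h; exact absurd rfl h
  · intro k _; simp

lemma bd_mix {n : ℕ} {g : (Fin (n+1) → Bool) → ℝ} {c p : ℝ} (hp : 0 ≤ p) (hp1 : p ≤ 1)
    (hg : BoundedDifferences g c) :
    BoundedDifferences (fun y => p * g (Fin.cons true y) + (1 - p) * g (Fin.cons false y)) c := by
  intro y y' i hyy'
  have h1 := bd_cons hg true y y' i hyy'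
  have h0 := bd_cons hg false y y' i hyy'
  simp only
  have habs1 := abs_le.1 h1
  have habs0 := abs_le.1 h0
  rw [abs_le]
  constructor <;> nlinarith [habs1.1, habs1.2, habs0.1, habs0.2]

lemma fact_ge (k : ℕ) : 2 * 3 ^ k ≤ (k + 2).factorial := by
  induction k with
  | zero => simp [Nat.factorial]
  | succ k ih =>
    have : (k + 3).factorial = (k + 3) * (k + 2).factorial := rfl
    calc 2 * 3 ^ (k+1) = 3 * (2 * 3 ^ k) := by ring
    _ ≤ 3 * (k + 2).factorial := by omega
    _ ≤ (k + 3) * (k + 2).factorial := by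
        have := (k+2).factorial_pos; nlinarith
    _ = (k + 3).factorial := this.symm

lemma L2 {x : ℝ} (hx : 0 ≤ x) (hx3 : x < 3) :
    exp x ≤ 1 + x + x ^ 2 / (2 * (1 - x / 3)) := by
  have hsum : Summable (fun n : ℕ => x ^ n / n.factorial) := Real.summable_pow_div_factorial x
  have hexp : Real.exp x = ∑' n : ℕ, x ^ n / n.factorial := by
    rw [Real.exp_eq_exp_ℝ, NormedSpace.exp_eq_tsum_div]
  have hsplit := Summable.sum_add_tsum_nat_add 2 hsum
  have hgeom : Summable (fun k : ℕ => x ^ 2 / 2 * (x / 3) ^ k) := by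
    apply Summable.mul_left
    exact summable_geometric_of_lt_one (by positivity) (by linarith)
  have htail : (∑' k : ℕ, x ^ (k + 2) / (k + 2).factorial)
      ≤ ∑' k : ℕ, x ^ 2 / 2 * (x / 3) ^ k := by
    have hs2 : Summable (fun k : ℕ => x ^ (k + 2) / ((k + 2).factorial : ℝ)) := by
      exact_mod_cast (summable_nat_add_iff (f := fun n : ℕ => x ^ n / (n.factorial : ℝ)) 2).2 hsum
    refine Summable.tsum_le_tsum (fun k => ?_) hs2 hgeom
    have h1 : (0:ℝ) < (k+2).factorial := by positivity
    have h2 : (2 * 3 ^ k : ℝ) ≤ (k + 2).factorial := by exact_mod_cast fact_ge k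
    have h3 : x ^ (k + 2) = x ^ 2 * x ^ k := by ring
    rw [div_le_iff₀ h1]
    calc x ^ (k+2) = x^2/2 * (x/3)^k * (2 * 3 ^ k) := by
          field_simp; rw [mul_assoc, ← mul_pow, div_mul_cancel₀ x (by norm_num : (3:ℝ) ≠ 0)]; ring
    _ ≤ x^2/2 * (x/3)^k * (k+2).factorial := by
          apply mul_le_mul_of_nonneg_left h2; positivity
  have hg : (∑' k : ℕ, x ^ 2 / 2 * (x / 3) ^ k) = x ^ 2 / 2 * (1 - x/3)⁻¹ := by
    rw [tsum_mul_left, tsum_geometric_of_lt_one (by positivity) (by linarith)]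
  have h13 : (0:ℝ) < 1 - x/3 := by linarith
  calc exp x = (∑ i ∈ Finset.range 2, x ^ i / i.factorial)
        + ∑' k : ℕ, x ^ (k + 2) / (k + 2).factorial := by rw [hexp, hsplit]
  _ ≤ (1 + x) + x ^ 2 / 2 * (1 - x/3)⁻¹ := by
      have hsum2 : (∑ i ∈ Finset.range 2, x ^ i / (i.factorial:ℝ)) = 1 + x := by
        norm_num [Finset.sum_range_succ]
      rw [hsum2, ← hg]; exact add_le_add_right htail _
  _ = 1 + x + x ^ 2 / (2 * (1 - x / 3)) := by field_simp

lemma L1 {x : ℝ} (hx : x ≤ 0) : exp x ≤ 1 + x + x ^ 2 / 2 := by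
  have h3 := Real.quadratic_le_exp_of_nonneg (neg_nonneg.2 hx)
  have hpos : (0:ℝ) < 1 + -x + (-x) ^ 2 / 2 := by nlinarith
  have hinv : exp x = (exp (-x))⁻¹ := by rw [← Real.exp_neg, neg_neg]
  rw [hinv]
  have h1 : (exp (-x))⁻¹ ≤ (1 + -x + (-x) ^ 2 / 2)⁻¹ := by
    apply inv_anti₀ hpos h3
  refine h1.trans ?_
  rw [inv_le_iff_one_le_mul₀ hpos]
  nlinarith [sq_nonneg x, sq_nonneg (x^2)]

lemma keyL {x u : ℝ} (hxu : x ≤ u) (hu : 0 ≤ u) (hu3 : u < 3) :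
    exp x ≤ 1 + x + x ^ 2 * (1 / (2 * (1 - u / 3))) := by
  have hden : (0:ℝ) < 1 - u / 3 := by linarith
  rcases le_or_gt x 0 with h | h
  · refine (L1 h).trans ?_
    have : x ^ 2 / 2 ≤ x ^ 2 * (1 / (2 * (1 - u / 3))) := by
      rw [div_le_iff₀ (by norm_num : (0:ℝ) < 2)]
      have h2 : (1:ℝ) / (2 * (1 - u / 3)) ≥ 1 / 2 := by
        apply one_div_le_one_div_of_le (by linarith) (by linarith)
      nlinarith [sq_nonneg x]
    linarith
  · have hx3 : x < 3 := lt_of_le_of_lt hxu hu3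
    refine (L2 h.le hx3).trans ?_
    have hdx : (0:ℝ) < 1 - x / 3 := by linarith
    have : x ^ 2 / (2 * (1 - x / 3)) ≤ x ^ 2 * (1 / (2 * (1 - u / 3))) := by
      rw [div_eq_mul_one_div]
      apply mul_le_mul_of_nonneg_left _ (sq_nonneg x)
      apply one_div_le_one_div_of_le (by linarith) (by linarith)
    linarith

lemma scalar_step {p c lam d : ℝ} (hp : 0 ≤ p) (hp1 : p ≤ 1) (hc : 0 < c)
    (hlam : 0 ≤ lam) (hlamc : lam * c < 3) (hd : |d| ≤ c) :
    p * exp (lam * ((1 - p) * d)) + (1 - p) * exp (lam * (-(p * d)))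
      ≤ exp (p * (1 - p) * c ^ 2 * lam ^ 2 * (1 / (2 * (1 - lam * c / 3)))) := by
  have habs := abs_le.1 hd
  have hu : 0 ≤ lam * c := by positivity
  set K : ℝ := 1 / (2 * (1 - lam * c / 3)) with hK
  have hKpos : 0 < K := by
    have : (0:ℝ) < 1 - lam * c / 3 := by linarith
    positivity
  set x1 : ℝ := lam * ((1 - p) * d)
  set x2 : ℝ := lam * (-(p * d))
  have hx1 : x1 ≤ lam * c := by
    have : (1 - p) * d ≤ c := by nlinarith
    exact mul_le_mul_of_nonneg_left this hlam
  have hx2 : x2 ≤ lam * c := by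
    have : -(p * d) ≤ c := by nlinarith
    exact mul_le_mul_of_nonneg_left this hlam
  have h1 := keyL hx1 hu hlamc
  have h2 := keyL hx2 hu hlamc
  have hcomb : p * exp x1 + (1 - p) * exp x2
      ≤ 1 + p * (1 - p) * c ^ 2 * lam ^ 2 * K := by
    have e1 : p * exp x1 ≤ p * (1 + x1 + x1 ^ 2 * K) := mul_le_mul_of_nonneg_left h1 hp
    have e2 : (1 - p) * exp x2 ≤ (1 - p) * (1 + x2 + x2 ^ 2 * K) :=
      mul_le_mul_of_nonneg_left h2 (by linarith)
    have hzero : p * x1 + (1 - p) * x2 = 0 := by simp only [x1, x2]; ring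
    have hvar : p * x1 ^ 2 + (1 - p) * x2 ^ 2 = p * (1 - p) * d ^ 2 * lam ^ 2 := by
      simp only [x1, x2]; ring
    have hd2 : d ^ 2 ≤ c ^ 2 := by nlinarith
    have hA : (0:ℝ) ≤ p * (1 - p) * lam ^ 2 * K :=
      mul_nonneg (mul_nonneg (mul_nonneg hp (by linarith)) (sq_nonneg lam)) hKpos.le
    have hdd : d ^ 2 * (p * (1 - p) * lam ^ 2 * K) ≤ c ^ 2 * (p * (1 - p) * lam ^ 2 * K) :=
      mul_le_mul_of_nonneg_right hd2 hA
    nlinarith [e1, e2]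
  refine hcomb.trans ?_
  have := Real.add_one_le_exp (p * (1 - p) * c ^ 2 * lam ^ 2 * K)
  linarith

lemma mgf_le (p c lam : ℝ) (hp : 0 ≤ p) (hp1 : p ≤ 1) (hc : 0 < c)
    (hlam : 0 ≤ lam) (hlamc : lam * c < 3) :
    ∀ (n : ℕ) (g : (Fin n → Bool) → ℝ), BoundedDifferences g c →
    ∑ x, wgt p x * exp (lam * (g x - EE p g)) ≤
      exp (n * (p * (1 - p) * c ^ 2 * lam ^ 2 * (1 / (2 * (1 - lam * c / 3))))) := by
  intro n
  induction n with
  | zero =>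
    intro g _
    have h2 : ∀ x : Fin 0 → Bool, wgt p x * exp (lam * (g x - EE p g)) = 1 := by
      intro x
      have hx : ∀ z : Fin 0 → Bool, z = x := fun z => funext (fun i => Fin.elim0 i)
      have h1 : wgt p x = 1 := by simp [wgt]
      have h3 : EE p g = g x := by
        unfold EE
        rw [Fintype.sum_eq_single x (fun z hz => absurd (hx z) hz), h1, one_mul]
      rw [h1, h3]
      simp
    rw [Finset.sum_congr rfl (fun x _ => h2 x)]
    simp
  | succ n ih =>
    intro g hg
    set K : ℝ := 1 / (2 * (1 - lam * c / 3)) with hKdef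
    set V : ℝ := p * (1 - p) * c ^ 2 * lam ^ 2 * K with hV
    set h : (Fin n → Bool) → ℝ :=
      fun y => p * g (Fin.cons true y) + (1 - p) * g (Fin.cons false y) with hh
    have hEE : EE p g = EE p h := by
      unfold EE
      rw [sum_cons (fun x => wgt p x * g x)]
      apply Finset.sum_congr rfl
      intro y _
      rw [wgt_cons_true, wgt_cons_false]
      simp only [hh]
      ring
    set M : ℝ := EE p g with hM
    have key : ∀ y : Fin n → Bool,
        wgt p (Fin.cons true y) * exp (lam * (g (Fin.cons true y) - M))
        + wgt p (Fin.cons false y) * exp (lam * (g (Fin.cons false y) - M))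
        ≤ wgt p y * exp (lam * (h y - M)) * exp V := by
      intro y
      set d : ℝ := g (Fin.cons true y) - g (Fin.cons false y) with hd
      have hdc : |d| ≤ c := bd_flip hg y
      have e1 : lam * (g (Fin.cons true y) - M) = lam * (h y - M) + lam * ((1 - p) * d) := by
        simp only [hh, hd]; ring
      have e0 : lam * (g (Fin.cons false y) - M) = lam * (h y - M) + lam * (-(p * d)) := by
        simp only [hh, hd]; ring
      rw [wgt_cons_true, wgt_cons_false, e1, e0, Real.exp_add, Real.exp_add]
      have hw := wgt_nonneg hp hp1 y
      have hexp : (0:ℝ) ≤ exp (lam * (h y - M)) := (Real.exp_pos _).le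
      have hs := scalar_step hp hp1 hc hlam hlamc hdc
      calc p * wgt p y * (exp (lam * (h y - M)) * exp (lam * ((1 - p) * d)))
            + (1 - p) * wgt p y * (exp (lam * (h y - M)) * exp (lam * (-(p * d))))
          = wgt p y * exp (lam * (h y - M)) *
            (p * exp (lam * ((1 - p) * d)) + (1 - p) * exp (lam * (-(p * d)))) := by ring
        _ ≤ wgt p y * exp (lam * (h y - M)) * exp V := by
            apply mul_le_mul_of_nonneg_left _ (mul_nonneg hw hexp)
            exact hs
    calc ∑ x, wgt p x * exp (lam * (g x - M))
        = ∑ y : Fin n → Bool,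
          (wgt p (Fin.cons true y) * exp (lam * (g (Fin.cons true y) - M))
          + wgt p (Fin.cons false y) * exp (lam * (g (Fin.cons false y) - M))) := by
          exact sum_cons (fun x => wgt p x * exp (lam * (g x - M)))
      _ ≤ ∑ y : Fin n → Bool, wgt p y * exp (lam * (h y - M)) * exp V := by
          exact Finset.sum_le_sum (fun y _ => key y)
      _ = (∑ y : Fin n → Bool, wgt p y * exp (lam * (h y - EE p h))) * exp V := by
          rw [← Finset.sum_mul, hEE]
      _ ≤ exp (n * V) * exp V := by
          apply mul_le_mul_of_nonneg_right _ (Real.exp_pos _).le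
          exact ih h (bd_mix hp hp1 hg)
      _ = exp ((n + 1 : ℕ) * V) := by
          rw [← Real.exp_add]; push_cast; ring_nf

lemma wgt_eq_zero_of_p_eq_zero {n : ℕ} {x : Fin n → Bool} (hx : x ≠ fun _ => false) :
    wgt 0 x = 0 := by
  have : ∃ i, x i = true := by
    by_contra hcon
    push_neg at hcon
    exact hx (funext fun i => by simpa using hcon i)
  obtain ⟨i, hi⟩ := this
  unfold wgt
  apply Finset.prod_eq_zero (Finset.mem_univ i)
  simp [hi]

lemma wgt_eq_zero_of_p_eq_one {n : ℕ} {x : Fin n → Bool} (hx : x ≠ fun _ => true) :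
    wgt 1 x = 0 := by
  have : ∃ i, x i = false := by
    by_contra hcon
    push_neg at hcon
    exact hx (funext fun i => by
      have := hcon i
      revert this
      cases x i <;> simp)
  obtain ⟨i, hi⟩ := this
  unfold wgt
  apply Finset.prod_eq_zero (Finset.mem_univ i)
  simp [hi]

lemma EE_p_zero {n : ℕ} (g : (Fin n → Bool) → ℝ) : EE 0 g = g (fun _ => false) := by
  unfold EE
  rw [Fintype.sum_eq_single (fun _ => false : Fin n → Bool)]
  · simp [wgt]
  · intro x hx
    rw [wgt_eq_zero_of_p_eq_zero hx, zero_mul]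

lemma EE_p_one {n : ℕ} (g : (Fin n → Bool) → ℝ) : EE 1 g = g (fun _ => true) := by
  unfold EE
  rw [Fintype.sum_eq_single (fun _ => true : Fin n → Bool)]
  · simp [wgt]
  · intro x hx
    rw [wgt_eq_zero_of_p_eq_one hx, zero_mul]

lemma tail_one_sided (p c : ℝ) (hp : 0 ≤ p) (hp1 : p ≤ 1) (hc : 0 < c) {n : ℕ}
    (g : (Fin n → Bool) → ℝ) (hg : BoundedDifferences g c) {t : ℝ} (ht : 0 < t) :
    ∑ x ∈ Finset.univ.filter (fun x => t ≤ g x - EE p g), wgt p x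
      ≤ exp (-(t ^ 2) / (2 * c ^ 2 * n * p * (1 - p) + 2 * c * t / 3)) := by
  by_cases hdeg : (n : ℝ) * p * (1 - p) = 0
  · have hzero : ∀ x ∈ Finset.univ.filter (fun x => t ≤ g x - EE p g), wgt p x = 0 := by
      rcases mul_eq_zero.1 hdeg with h | hp1'
      · rcases mul_eq_zero.1 h with hn | hp0
        · intro x hx
          exfalso
          have hn0 : n = 0 := by exact_mod_cast hn
          subst hn0
          have hEEx : EE p g = g x := by
            unfold EE
            rw [Fintype.sum_eq_single x (fun z hz => absurd (funext fun i => Fin.elim0 i) hz)]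
            simp [wgt]
          rw [Finset.mem_filter, hEEx] at hx
          linarith [hx.2]
        · intro x hx
          rw [Finset.mem_filter] at hx
          subst hp0
          by_cases hxx : x = fun _ => false
          · exfalso
            rw [hxx, ← EE_p_zero g] at hx
            linarith [hx.2]
          · exact wgt_eq_zero_of_p_eq_zero hxx
      · have hp1'' : p = 1 := by linarith
        intro x hx
        rw [Finset.mem_filter] at hx
        subst hp1''
        by_cases hxx : x = fun _ => true
        · exfalso
          rw [hxx, ← EE_p_one g] at hx
          linarith [hx.2]
        · exact wgt_eq_zero_of_p_eq_one hxx
    rw [Finset.sum_eq_zero hzero]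
    positivity
  · have h0 : 0 ≤ (n : ℝ) * p * (1 - p) :=
      mul_nonneg (mul_nonneg (Nat.cast_nonneg n) hp) (by linarith)
    have hq : 0 < (n : ℝ) * p * (1 - p) := lt_of_le_of_ne h0 (Ne.symm hdeg)
    set V : ℝ := c ^ 2 * n * p * (1 - p) with hVdef
    have hV : 0 < V := by
      have hV2 : V = c ^ 2 * ((n : ℝ) * p * (1 - p)) := by rw [hVdef]; ring
      rw [hV2]; positivity
    set S : ℝ := V + c * t / 3 with hSdef
    have hS : 0 < S := by positivity
    set lam : ℝ := t / S with hlamdef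
    have hlam : 0 < lam := by positivity
    have hlamc : lam * c < 3 := by
      rw [hlamdef, div_mul_eq_mul_div, div_lt_iff₀ hS, hSdef]
      nlinarith
    have hmgf := mgf_le p c lam hp hp1 hc hlam.le hlamc n g hg
    set M : ℝ := EE p g with hM
    have step1 : ∑ x ∈ Finset.univ.filter (fun x => t ≤ g x - M), wgt p x
        ≤ ∑ x, wgt p x * exp (lam * (g x - M - t)) := by
      calc ∑ x ∈ Finset.univ.filter (fun x => t ≤ g x - M), wgt p x
          ≤ ∑ x ∈ Finset.univ.filter (fun x => t ≤ g x - M),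
              wgt p x * exp (lam * (g x - M - t)) := by
            apply Finset.sum_le_sum
            intro x hx
            rw [Finset.mem_filter] at hx
            have h1 : (0:ℝ) ≤ lam * (g x - M - t) :=
              mul_nonneg hlam.le (by linarith [hx.2])
            nth_rewrite 1 [← mul_one (wgt p x)]
            exact mul_le_mul_of_nonneg_left (Real.one_le_exp h1) (wgt_nonneg hp hp1 x)
        _ ≤ ∑ x, wgt p x * exp (lam * (g x - M - t)) := by
            apply Finset.sum_le_sum_of_subset_of_nonneg (Finset.filter_subset _ _)
            intro x _ _
            exact mul_nonneg (wgt_nonneg hp hp1 x) (Real.exp_pos _).le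
    have step2 : ∑ x, wgt p x * exp (lam * (g x - M - t))
        = exp (-(lam * t)) * ∑ x, wgt p x * exp (lam * (g x - M)) := by
      rw [Finset.mul_sum]
      apply Finset.sum_congr rfl
      intro x _
      rw [show lam * (g x - M - t) = -(lam * t) + lam * (g x - M) by ring, Real.exp_add]
      ring
    have hexp_eq : -(lam * t) + n * (p * (1 - p) * c ^ 2 * lam ^ 2 * (1 / (2 * (1 - lam * c / 3))))
        = -(t ^ 2) / (2 * c ^ 2 * n * p * (1 - p) + 2 * c * t / 3) := by
      have h13 : 1 - lam * c / 3 = V / S := by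
        rw [hlamdef, hSdef]
        field_simp
        ring
      rw [h13]
      have hD : 2 * c ^ 2 * (n : ℝ) * p * (1 - p) + 2 * c * t / 3 = 2 * S := by
        rw [hSdef, hVdef]; ring
      rw [hD]
      have hnV : (n : ℝ) * (p * (1 - p) * c ^ 2) = V := by rw [hVdef]; ring
      have e2 : (n:ℝ) * (p * (1 - p) * c ^ 2 * lam ^ 2 * (1 / (2 * (V / S))))
          = V * lam ^ 2 * (1 / (2 * (V / S))) := by
        rw [← hnV]; ring
      rw [e2, hlamdef]
      field_simp
      ring
    calc ∑ x ∈ Finset.univ.filter (fun x => t ≤ g x - M), wgt p x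
        ≤ ∑ x, wgt p x * exp (lam * (g x - M - t)) := step1
      _ = exp (-(lam * t)) * ∑ x, wgt p x * exp (lam * (g x - M)) := step2
      _ ≤ exp (-(lam * t)) * exp (n * (p * (1 - p) * c ^ 2 * lam ^ 2 * (1 / (2 * (1 - lam * c / 3))))) := by
          exact mul_le_mul_of_nonneg_left hmgf (Real.exp_pos _).le
      _ = exp (-(t ^ 2) / (2 * c ^ 2 * n * p * (1 - p) + 2 * c * t / 3)) := by
          rw [← Real.exp_add, hexp_eq]


theorem stronger_mcdiarmid
    {Ω : Type*} [MeasurableSpace Ω] (μ : Measure Ω) [IsProbabilityMeasure μ]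
    {n : ℕ} (p c : ℝ) (hp : 0 ≤ p) (hp1 : p ≤ 1) (hc : 0 < c)
    (X : Fin n → Ω → Bool) (hXmeas : ∀ i, Measurable (X i))
    (hindep : iIndepFun X μ)
    (hbern : ∀ i, μ {ω | X i ω = true} = ENNReal.ofReal p)
    (f : (Fin n → Bool) → ℝ) (hf : BoundedDifferences f c)
    (t : ℝ) (ht : 0 < t) :
    μ {ω | t ≤ |f (fun i => X i ω) - ∫ ω', f (fun i => X i ω') ∂μ|}
      ≤ ENNReal.ofReal
          (2 * exp (-(t ^ 2) / (2 * c ^ 2 * n * p * (1 - p) + 2 * c * t / 3))) := by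
  classical
  set T : Ω → (Fin n → Bool) := fun ω i => X i ω with hTdef
  have hTmeas : Measurable T := measurable_pi_lambda _ hXmeas
  have hfiber : ∀ x : Fin n → Bool, μ (T ⁻¹' {x}) = ENNReal.ofReal (wgt p x) := by
    intro x
    have hset : T ⁻¹' {x} = ⋂ i ∈ Finset.univ, X i ⁻¹' {x i} := by
      ext ω
      simp only [Set.mem_preimage, Set.mem_singleton_iff, Set.mem_iInter, funext_iff]
      constructor
      · intro h i _; exact h i
      · intro h i; exact h i (Finset.mem_univ i)
    rw [hset,
      hindep.measure_inter_preimage_eq_mul Finset.univ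
        (fun i _ => measurableSet_singleton (x i))]
    have hone : ∀ i, μ (X i ⁻¹' {x i}) = ENNReal.ofReal (if x i then p else 1 - p) := by
      intro i
      cases hxi : x i
      · have hc' : X i ⁻¹' {false} = {ω | X i ω = true}ᶜ := by
          ext ω
          simp [Set.mem_preimage]
        have hmt : MeasurableSet {ω | X i ω = true} :=
          hXmeas i (measurableSet_singleton true)
        rw [hc', measure_compl hmt (measure_ne_top μ _), hbern i, measure_univ]
        rw [if_neg (by simp)]
        rw [ENNReal.ofReal_sub _ hp, ENNReal.ofReal_one]
      · have : X i ⁻¹' {true} = {ω | X i ω = true} := rfl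
        rw [this, hbern i, if_pos rfl]
    rw [Finset.prod_congr rfl (fun i _ => hone i),
      ← ENNReal.ofReal_prod_of_nonneg
        (fun i _ => by by_cases h : x i <;> simp [h] <;> linarith)]
    rfl
  have hmapP : IsProbabilityMeasure (μ.map T) :=
    Measure.isProbabilityMeasure_map hTmeas.aemeasurable
  have hmaps : ∀ x, (μ.map T) {x} = ENNReal.ofReal (wgt p x) := fun x => by
    rw [Measure.map_apply hTmeas (measurableSet_singleton x)]; exact hfiber x
  have hfmeas : Measurable f := measurable_of_countable f
  have hint : ∫ ω', f (fun i => X i ω') ∂μ = EE p f := by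
    have h1 : ∫ ω', f (T ω') ∂μ = ∫ y, f y ∂(μ.map T) :=
      (integral_map hTmeas.aemeasurable hfmeas.aestronglyMeasurable).symm
    rw [show (fun ω' => f (fun i => X i ω')) = fun ω' => f (T ω') from rfl] at *
    rw [h1, integral_fintype (.of_finite)]
    unfold EE
    apply Finset.sum_congr rfl
    intro x _
    rw [measureReal_def, hmaps x, ENNReal.toReal_ofReal (wgt_nonneg hp hp1 x), smul_eq_mul]
  set A : Set (Fin n → Bool) := {y | t ≤ |f y - EE p f|} with hA
  set Afin : Finset (Fin n → Bool) := Finset.univ.filter (fun y => t ≤ |f y - EE p f|)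
    with hAfin
  have hev : {ω | t ≤ |f (fun i => X i ω) - ∫ ω', f (fun i => X i ω') ∂μ|}
      = T ⁻¹' (↑Afin : Set (Fin n → Bool)) := by
    ext ω
    simp only [Set.mem_setOf_eq, Set.mem_preimage, hint, Finset.mem_coe, hAfin,
      Finset.mem_filter, Finset.mem_univ, true_and]
    exact Iff.rfl
  rw [hev]
  rw [← sum_measure_preimage_singleton Afin
      (fun y _ => hTmeas (measurableSet_singleton y))]
  have hsum : ∑ y ∈ Afin, μ (T ⁻¹' {y}) = ENNReal.ofReal (∑ y ∈ Afin, wgt p y) := by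
    rw [ENNReal.ofReal_sum_of_nonneg (fun y _ => wgt_nonneg hp hp1 y)]
    exact Finset.sum_congr rfl (fun y _ => hfiber y)
  rw [hsum]
  apply ENNReal.ofReal_le_ofReal
  -- discrete two-sided bound
  set g : (Fin n → Bool) → ℝ := fun y => -f y with hgdef
  have hgbd : BoundedDifferences g c := by
    intro x x' i hxx'
    rw [hgdef]
    have h2 : -f x - -f x' = -(f x - f x') := by ring
    simp only
    rw [h2, abs_neg]
    exact hf x x' i hxx'
  have hEEneg : EE p g = -EE p f := by
    unfold EE
    rw [← Finset.sum_neg_distrib]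
    exact Finset.sum_congr rfl (fun y _ => by rw [hgdef]; ring)
  set Aplus : Finset (Fin n → Bool) := Finset.univ.filter (fun x => t ≤ f x - EE p f)
    with hAp
  set Aminus : Finset (Fin n → Bool) := Finset.univ.filter (fun x => t ≤ g x - EE p g)
    with hAm
  have hsubset : Afin ⊆ Aplus ∪ Aminus := by
    intro y hy
    rw [hAfin, Finset.mem_filter] at hy
    rcases le_abs.1 hy.2 with h | h
    · exact Finset.mem_union_left _ (Finset.mem_filter.2 ⟨Finset.mem_univ y, h⟩)
    · refine Finset.mem_union_right _ (Finset.mem_filter.2 ⟨Finset.mem_univ y, ?_⟩)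
      rw [hgdef, hEEneg]
      simp only
      linarith
  have hb1 := tail_one_sided p c hp hp1 hc f hf ht
  have hb2 := tail_one_sided p c hp hp1 hc g hgbd ht
  calc ∑ y ∈ Afin, wgt p y
      ≤ ∑ y ∈ Aplus ∪ Aminus, wgt p y :=
        Finset.sum_le_sum_of_subset_of_nonneg hsubset
          (fun y _ _ => wgt_nonneg hp hp1 y)
    _ ≤ ∑ y ∈ Aplus, wgt p y + ∑ y ∈ Aminus, wgt p y := by
        have h : ∑ y ∈ Aplus ∪ Aminus, wgt p y + ∑ y ∈ Aplus ∩ Aminus, wgt p y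
            = ∑ y ∈ Aplus, wgt p y + ∑ y ∈ Aminus, wgt p y := Finset.sum_union_inter
        have hnn : 0 ≤ ∑ y ∈ Aplus ∩ Aminus, wgt p y :=
          Finset.sum_nonneg (fun y _ => wgt_nonneg hp hp1 y)
        linarith
    _ ≤ exp (-(t ^ 2) / (2 * c ^ 2 * n * p * (1 - p) + 2 * c * t / 3))
        + exp (-(t ^ 2) / (2 * c ^ 2 * n * p * (1 - p) + 2 * c * t / 3)) :=
        add_le_add hb1 hb2
    _ = 2 * exp (-(t ^ 2) / (2 * c ^ 2 * n * p * (1 - p) + 2 * c * t / 3)) := by ring
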